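/- Let Ω be a finite basis for a category J, let C be a dagger category enriched in commutative monoids (each hom-set carries a commutative monoid structure and composition is biadditive), and D : J ⥤ C a diagram. A limit cone (L, (l_A : L ⟶ D A)) of D is a dagger limit of (D, Ω) if and only if 𝟙_L = Σ_{A ∈ Ω} l_A† ∘ l_A. -/

import Mathlib

open CategoryTheory

universe v u v₁ u₁ v₂ u₂

class DaggerCategory (C : Type u) [Category.{v} C] where
  dag : ∀ {A B : C}, (A ⟶ B) → (B ⟶ A)
  dag_id : ∀ (A : C), dag (𝟙 A) = 𝟙 A
  dag_comp : ∀ {A B X : C} (f : A ⟶ B) (g : B ⟶ X), dag (f ≫ g) = dag g ≫ dag f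
  dag_dag : ∀ {A B : C} (f : A ⟶ B), dag (dag f) = f

postfix:max "†" => DaggerCategory.dag

section Defs

variable {C : Type u} [Category.{v} C] [DaggerCategory C]

/-- A morphism `f` is a partial isometry if `f ∘ f† ∘ f = f`. -/
def IsPartialIsometry {A B : C} (f : A ⟶ B) : Prop :=
  f ≫ f† ≫ f = f

/-- A morphism `f : A ⟶ B` is unitary if `f† ∘ f = 𝟙 A` and `f ∘ f† = 𝟙 B`. -/
def IsUnitary {A B : C} (f : A ⟶ B) : Prop :=
  f ≫ f† = 𝟙 A ∧ f† ≫ f = 𝟙 B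

/-- A morphism `f` is dagger monic (an isometry) if `f† ∘ f = 𝟙`. -/
def DaggerMonic {A B : C} (f : A ⟶ B) : Prop :=
  f ≫ f† = 𝟙 A

/-- `(L, l)` is a limit cone over the diagram `D`. -/
def IsLimitCone {J : Type u₁} [Category.{v₁} J] (D : J ⥤ C) (L : C)
    (l : ∀ j : J, L ⟶ D.obj j) : Prop :=
  (∀ {j j' : J} (f : j ⟶ j'), l j ≫ D.map f = l j') ∧
  (∀ (M : C) (m : ∀ j : J, M ⟶ D.obj j),
    (∀ {j j' : J} (f : j ⟶ j'), m j ≫ D.map f = m j') →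
    ∃! g : M ⟶ L, ∀ j : J, g ≫ l j = m j)

/-- A class of objects `Ω` is weakly initial when every object admits a morphism
from some member of `Ω`. -/
def WeaklyInitial {J : Type u₁} [Category.{v₁} J] (Ω : Set J) : Prop :=
  ∀ B : J, ∃ A ∈ Ω, Nonempty (A ⟶ B)

/-- `(L, l)` is a dagger limit of `(D, Ω)`: a limit cone whose legs at `Ω` are
partial isometries with pairwise commuting induced projections. -/
def IsDaggerLimit {J : Type u₁} [Category.{v₁} J] (D : J ⥤ C) (Ω : Set J) (L : C)
    (l : ∀ j : J, L ⟶ D.obj j) : Prop :=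
  IsLimitCone D L l ∧
  (∀ j ∈ Ω, IsPartialIsometry (l j)) ∧
  (∀ j ∈ Ω, ∀ j' ∈ Ω,
    (l j ≫ (l j)†) ≫ (l j' ≫ (l j')†) = (l j' ≫ (l j')†) ≫ (l j ≫ (l j)†))

end Defs

/-- A class `Ω` of objects of `J` is a basis when every object `B` admits a unique `A ∈ Ω`
with `J(A, B)` nonempty. -/
def IsBasis {J : Type u₁} [Category.{v₁} J] (Ω : Set J) : Prop :=
  ∀ B : J, ∃! A : J, A ∈ Ω ∧ Nonempty (A ⟶ B)

/-- Let `Ω` be a finite basis for `J` and `C` a dagger category enriched in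
commutative monoids (hom-sets are commutative monoids and composition is biadditive, with the
additive units being zero morphisms). A limit cone `(L, l)` of `D : J ⥤ C` is a dagger limit
of `(D, Ω)` iff `𝟙 L = ∑_{A ∈ Ω} l_A† ∘ l_A`. -/
theorem daggerLimit_iff_sum_eq_id {C : Type u} [Category.{v} C] [DaggerCategory C]
    [∀ A B : C, AddCommMonoid (A ⟶ B)]
    (hcomp_add : ∀ {A B X : C} (f : A ⟶ B) (g h : B ⟶ X), f ≫ (g + h) = f ≫ g + f ≫ h)
    (hadd_comp : ∀ {A B X : C} (f g : A ⟶ B) (h : B ⟶ X), (f + g) ≫ h = f ≫ h + g ≫ h)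
    (hcomp_zero : ∀ {A B X : C} (f : A ⟶ B), f ≫ (0 : B ⟶ X) = 0)
    (hzero_comp : ∀ {A B X : C} (h : B ⟶ X), (0 : A ⟶ B) ≫ h = 0)
    {J : Type u₁} [Category.{v₁} J] (Ω : Set J) (hfin : Ω.Finite) (hΩ : IsBasis Ω)
    (D : J ⥤ C) {L : C} (l : ∀ j : J, L ⟶ D.obj j) (hL : IsLimitCone D L l) :
    IsDaggerLimit D Ω L l ↔ 𝟙 L = ∑ j ∈ hfin.toFinset, l j ≫ (l j)† := by
  classical
  have hcone : ∀ {j j' : J} (f : j ⟶ j'), l j ≫ D.map f = l j' := hL.1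
  have huniv : ∀ (M : C) (m : ∀ j : J, M ⟶ D.obj j),
      (∀ {j j' : J} (f : j ⟶ j'), m j ≫ D.map f = m j') →
      ∃! g : M ⟶ L, ∀ j : J, g ≫ l j = m j := hL.2
  -- choose the basis element for each object
  have hb : ∀ B : J, ∃ A : J, (A ∈ Ω ∧ Nonempty (A ⟶ B)) ∧
      ∀ y : J, (y ∈ Ω ∧ Nonempty (y ⟶ B)) → y = A := hΩ
  choose φ hφ hφuniq using hb
  have hφΩ : ∀ j : J, φ j ∈ Ω := fun j => (hφ j).1
  have hφne : ∀ j : J, Nonempty (φ j ⟶ j) := fun j => (hφ j).2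
  have hstab : ∀ {j j' : J} (f : j ⟶ j'), φ j' = φ j := by
    intro j j' f
    exact (hφuniq j' (φ j) ⟨hφΩ j, ⟨(hφne j).some ≫ f⟩⟩).symm
  have hself : ∀ A ∈ Ω, φ A = A := fun A hA => (hφuniq A A ⟨hA, ⟨𝟙 A⟩⟩).symm
  -- the "delta" cones
  have hconeM : ∀ (A : J) {j j' : J} (f : j ⟶ j'),
      (if φ j = A then l j else 0) ≫ D.map f = (if φ j' = A then l j' else 0) := by
    intro A j j' f
    have h := hstab f
    by_cases hc : φ j = A
    · rw [if_pos hc, if_pos (h.trans hc), hcone f]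
    · rw [if_neg hc, if_neg (fun hc' => hc (h.symm.trans hc'))]
      exact hzero_comp _
  have hEex : ∀ A : J, ∃! g : L ⟶ L, ∀ j, g ≫ l j = if φ j = A then l j else 0 :=
    fun A => huniv L (fun j => if φ j = A then l j else 0) (fun {j j'} f => hconeM A f)
  choose E hE hEuniq using hEex
  -- sums of morphisms compose termwise
  have sum_comp : ∀ {X Y Z : C} (s : Finset J) (f : J → (X ⟶ Y)) (g : Y ⟶ Z),
      (∑ i ∈ s, f i) ≫ g = ∑ i ∈ s, f i ≫ g := by
    intro X Y Z s f g
    induction s using Finset.induction_on with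
    | empty => simpa using hzero_comp g
    | insert _ _ h ih => rw [Finset.sum_insert h, Finset.sum_insert h, hadd_comp, ih]
  have comp_sum : ∀ {X Y Z : C} (s : Finset J) (g : X ⟶ Y) (f : J → (Y ⟶ Z)),
      g ≫ (∑ i ∈ s, f i) = ∑ i ∈ s, g ≫ f i := by
    intro X Y Z s g f
    induction s using Finset.induction_on with
    | empty => simpa using hcomp_zero g
    | insert _ _ h ih => rw [Finset.sum_insert h, Finset.sum_insert h, hcomp_add, ih]
  -- uniqueness of mediating maps for the cone `l` and for the zero cone
  have hIdUniq : ∀ g : L ⟶ L, (∀ j, g ≫ l j = l j) → g = 𝟙 L := by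
    intro g hg
    obtain ⟨u, _, huu⟩ := huniv L l (fun {j j'} f => hcone f)
    rw [huu g hg, huu (𝟙 L) (fun j => Category.id_comp _)]
  have hZeroUniq : ∀ g : L ⟶ L, (∀ j, g ≫ l j = 0) → g = 0 := by
    intro g hg
    obtain ⟨u, _, huu⟩ := huniv L (fun _ => 0) (fun {j j'} f => hzero_comp _)
    rw [huu g hg, huu 0 (fun j => hzero_comp _)]
  -- basic facts about the idempotents E
  have hEl : ∀ A ∈ Ω, E A ≫ l A = l A := by
    intro A hA
    rw [hE A A, if_pos (hself A hA)]
  have hEl0 : ∀ (A B : J), B ∈ Ω → B ≠ A → E A ≫ l B = 0 := by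
    intro A B hB hne
    rw [hE A B, if_neg (fun h => hne ((hself B hB).symm.trans h))]
  have hEp : ∀ A ∈ Ω, E A ≫ (l A ≫ (l A)†) = l A ≫ (l A)† := by
    intro A hA
    rw [← Category.assoc, hEl A hA]
  have hEp0 : ∀ (A B : J), A ∈ Ω → B ∈ Ω → B ≠ A → E B ≫ (l A ≫ (l A)†) = 0 := by
    intro A B hA hB hne
    rw [← Category.assoc, hEl0 B A hA (fun h => hne h.symm), hzero_comp]
  constructor
  · rintro ⟨-, pis, comm⟩
    have hnorm : ∀ A ∈ Ω, (l A ≫ (l A)†) ≫ l A = l A := by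
      intro A hA
      rw [Category.assoc]
      exact pis A hA
    have horth : ∀ A ∈ Ω, ∀ B ∈ Ω, A ≠ B →
        (l A ≫ (l A)†) ≫ (l B ≫ (l B)†) = 0 := by
      intro A hA B hB hne
      have h1 : E B ≫ ((l A ≫ (l A)†) ≫ (l B ≫ (l B)†)) = 0 := by
        rw [← Category.assoc, hEp0 A B hA hB (Ne.symm hne), hzero_comp]
      have h2 : E B ≫ ((l B ≫ (l B)†) ≫ (l A ≫ (l A)†)) =
          (l B ≫ (l B)†) ≫ (l A ≫ (l A)†) := by
        rw [← Category.assoc, hEp B hB]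
      have hcomm := comm A hA B hB
      rw [hcomm, ← h2, ← hcomm, h1]
    have hpl : ∀ A ∈ Ω, ∀ j, (l A ≫ (l A)†) ≫ l j = if φ j = A then l j else 0 := by
      intro A hA j
      have hlj : l (φ j) ≫ D.map (hφne j).some = l j := hcone (hφne j).some
      by_cases hc : φ j = A
      · rw [if_pos hc]
        obtain ⟨f⟩ := hφne j
        have hf : l A ≫ D.map (hc ▸ f : A ⟶ j) = l j := hcone _
        rw [← hf, ← Category.assoc, hnorm A hA]
      · rw [if_neg hc, ← hlj, ← Category.assoc]
        have h1 : ((l A ≫ (l A)†) ≫ (l (φ j) ≫ (l (φ j))†)) ≫ l (φ j) =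
            (l A ≫ (l A)†) ≫ l (φ j) := by
          rw [Category.assoc, hnorm (φ j) (hφΩ j)]
        rw [← h1, horth A hA (φ j) (hφΩ j) (fun h => hc h.symm), hzero_comp, hzero_comp]
    refine (hIdUniq _ ?_).symm
    intro j
    rw [sum_comp]
    rw [Finset.sum_congr rfl
      (fun A hA => hpl A (hfin.mem_toFinset.mp hA) j),
      Finset.sum_ite_eq, if_pos (hfin.mem_toFinset.mpr (hφΩ j))]
  · intro h
    have hEP : ∀ B ∈ Ω, E B = l B ≫ (l B)† := by
      intro B hB
      calc E B = E B ≫ 𝟙 L := (Category.comp_id _).symm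
        _ = E B ≫ ∑ A ∈ hfin.toFinset, l A ≫ (l A)† := by rw [← h]
        _ = ∑ A ∈ hfin.toFinset, E B ≫ (l A ≫ (l A)†) := comp_sum _ _ _
        _ = ∑ A ∈ hfin.toFinset, (if B = A then l B ≫ (l B)† else 0) := by
            refine Finset.sum_congr rfl (fun A hA => ?_)
            by_cases hc : B = A
            · rw [if_pos hc]
              subst hc
              exact hEp B hB
            · rw [if_neg hc]
              exact hEp0 A B (hfin.mem_toFinset.mp hA) hB hc
        _ = l B ≫ (l B)† := by
            rw [Finset.sum_ite_eq, if_pos (hfin.mem_toFinset.mpr hB)]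
    refine ⟨hL, ?_, ?_⟩
    · intro j hj
      show l j ≫ (l j)† ≫ l j = l j
      rw [← Category.assoc, ← hEP j hj, hEl j hj]
    · intro A hA B hB
      by_cases hc : A = B
      · subst hc; rfl
      · have hz : ∀ X Y : J, X ∈ Ω → Y ∈ Ω → X ≠ Y →
            (l X ≫ (l X)†) ≫ (l Y ≫ (l Y)†) = 0 := by
          intro X Y hX hY hne
          rw [← hEP X hX, ← hEP Y hY]
          apply hZeroUniq
          intro j
          rw [Category.assoc, hE Y j]
          by_cases hcy : φ j = Y
          · rw [if_pos hcy, hE X j, if_neg (fun hx => hne (hx.symm.trans hcy))]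
          · rw [if_neg hcy, hcomp_zero]
        rw [hz A B hA hB hc, hz B A hB hA (Ne.symm hc)]
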